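/- For every non-complete connected graph G, sgc(G) ≤ n(G) − sg(G), where n(G) is the order of G. -/

import Mathlib

open SimpleGraph

/-- A choice of one fixed shortest path (geodesic) between each pair of vertices,
symmetric in the sense that the path from `v` to `u` is the reverse of the one
from `u` to `v`. -/
def StrongGeodeticChoice {V : Type*} (G : SimpleGraph V) (p : ∀ u v : V, G.Walk u v) : Prop :=
  ∀ u v : V, (p u v).IsPath ∧ (p u v).length = G.dist u v ∧ p v u = (p u v).reverse

/-- `S` is a strong geodetic set of `G`: one can fix one shortest path between each
pair of vertices of `S` so that every vertex of `G` lies on some fixed path. -/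
def IsStrongGeodeticSet {V : Type*} (G : SimpleGraph V) (S : Set V) : Prop :=
  ∃ p : ∀ u v : V, G.Walk u v, StrongGeodeticChoice G p ∧
    ∀ w : V, ∃ u ∈ S, ∃ v ∈ S, w ∈ (p u v).support

/-- The strong geodetic number of `G`. -/
noncomputable def sg {V : Type*} (G : SimpleGraph V) : ℕ :=
  sInf {n | ∃ S : Set V, S.ncard = n ∧ IsStrongGeodeticSet G S}

/-- The strong geodetic core number of `G`: the minimum, over minimum strong
geodetic sets `S` together with a choice of fixed geodesics witnessing them,
of the size of a subset `X ⊆ S` such that the fixed paths with an endpoint in `X`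
already cover all vertices. -/
noncomputable def sgc {V : Type*} (G : SimpleGraph V) : ℕ :=
  sInf {k | ∃ (S X : Set V) (p : ∀ u v : V, G.Walk u v),
    StrongGeodeticChoice G p ∧ S.ncard = sg G ∧
    (∀ w : V, ∃ u ∈ S, ∃ v ∈ S, w ∈ (p u v).support) ∧
    X ⊆ S ∧ X.ncard = k ∧
    (∀ w : V, ∃ u ∈ X, ∃ v ∈ S, w ∈ (p u v).support)}

/-- `A` is a geodetic set: every vertex lies on some shortest path between two
vertices of `A`. -/
def IsGeodeticSet {V : Type*} (G : SimpleGraph V) (A : Set V) : Prop :=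
  ∀ w : V, ∃ u ∈ A, ∃ v ∈ A, ∃ q : G.Walk u v, q.length = G.dist u v ∧ w ∈ q.support

/-- The geodetic number of `G`. -/
noncomputable def geodeticNumber {V : Type*} (G : SimpleGraph V) : ℕ :=
  sInf {n | ∃ A : Set V, A.ncard = n ∧ IsGeodeticSet G A}

section Aux

variable {V : Type*} [DecidableEq V] (G : SimpleGraph V)

/-- A fixed geodesic path between any two vertices of a connected graph. -/
noncomputable def geoWalk (hG : G.Connected) (u v : V) : G.Walk u v :=
  (hG.exists_walk_length_eq_dist u v).choose.bypass

lemma geoWalk_isPath (hG : G.Connected) (u v : V) : (geoWalk G hG u v).IsPath :=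
  SimpleGraph.Walk.bypass_isPath _

lemma geoWalk_length (hG : G.Connected) (u v : V) :
    (geoWalk G hG u v).length = G.dist u v := by
  have h := (hG.exists_walk_length_eq_dist u v).choose_spec
  have h1 : G.dist u v ≤ (geoWalk G hG u v).length := SimpleGraph.dist_le _
  have h2 : (geoWalk G hG u v).length ≤
      (hG.exists_walk_length_eq_dist u v).choose.length :=
    SimpleGraph.Walk.length_bypass_le _
  omega

/-- A symmetric choice of geodesics between all pairs. -/
lemma exists_strongGeodeticChoice (hG : G.Connected) :
    ∃ p : ∀ u v : V, G.Walk u v, StrongGeodeticChoice G p := by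
  letI : LinearOrder V := IsWellOrder.linearOrder WellOrderingRel
  refine ⟨fun u v => if u ≤ v then geoWalk G hG u v else (geoWalk G hG v u).reverse, ?_⟩
  intro u v
  dsimp only
  by_cases huv : u ≤ v
  · by_cases hvu : v ≤ u
    · have heq : u = v := le_antisymm huv hvu
      subst heq
      refine ⟨?_, ?_, ?_⟩
      · rw [if_pos le_rfl]; exact geoWalk_isPath G hG u u
      · rw [if_pos le_rfl]; exact geoWalk_length G hG u u
      · have h0 : (geoWalk G hG u u).length = 0 := by
          rw [geoWalk_length]; exact SimpleGraph.dist_self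
        rw [SimpleGraph.Walk.length_eq_zero_iff] at h0
        rw [if_pos le_rfl, h0.eq_nil]; rfl
    · refine ⟨?_, ?_, ?_⟩
      · rw [if_pos huv]; exact geoWalk_isPath G hG u v
      · rw [if_pos huv]; exact geoWalk_length G hG u v
      · rw [if_pos huv, if_neg hvu]
  · have hvu : v ≤ u := le_of_not_ge huv
    refine ⟨?_, ?_, ?_⟩
    · rw [if_neg huv]; exact (geoWalk_isPath G hG v u).reverse
    · rw [if_neg huv, SimpleGraph.Walk.length_reverse, geoWalk_length, SimpleGraph.dist_comm]
    · rw [if_neg huv, if_pos hvu, SimpleGraph.Walk.reverse_reverse]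

variable {u0 v0 : V}

/-- Patch a choice of geodesics by a given geodesic between `u0` and `v0`. -/
noncomputable def patchP (q : G.Walk u0 v0) (p : ∀ a b : V, G.Walk a b) :
    ∀ a b : V, G.Walk a b := fun a b =>
  if h : a = u0 ∧ b = v0 then q.copy h.1.symm h.2.symm
  else if h' : a = v0 ∧ b = u0 then q.reverse.copy h'.1.symm h'.2.symm
  else p a b

lemma patchP_choice (hne : u0 ≠ v0) {q : G.Walk u0 v0} (hq : q.IsPath)
    (hql : q.length = G.dist u0 v0) {p : ∀ a b : V, G.Walk a b}
    (hp : StrongGeodeticChoice G p) :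
    StrongGeodeticChoice G (patchP G q p) ∧ patchP G q p u0 v0 = q := by
  have hval : patchP G q p u0 v0 = q := by
    unfold patchP
    rw [dif_pos ⟨rfl, rfl⟩, SimpleGraph.Walk.copy_rfl_rfl]
  have hval' : patchP G q p v0 u0 = q.reverse := by
    have h1 : ¬ (v0 = u0 ∧ u0 = v0) := fun h => hne h.1.symm
    unfold patchP
    rw [dif_neg h1, dif_pos ⟨rfl, rfl⟩, SimpleGraph.Walk.copy_rfl_rfl]
  refine ⟨?_, hval⟩
  intro u v
  by_cases h1 : u = u0 ∧ v = v0
  · obtain ⟨rfl, rfl⟩ := h1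
    rw [hval, hval']
    exact ⟨hq, hql, rfl⟩
  · by_cases h2 : u = v0 ∧ v = u0
    · obtain ⟨rfl, rfl⟩ := h2
      rw [hval, hval', SimpleGraph.Walk.reverse_reverse]
      refine ⟨hq.reverse, ?_, rfl⟩
      rw [SimpleGraph.Walk.length_reverse, hql, SimpleGraph.dist_comm]
    · have e1 : patchP G q p u v = p u v := by
        simp only [patchP, dif_neg h1, dif_neg h2]
      have e2 : patchP G q p v u = p v u := by
        have h1' : ¬ (v = u0 ∧ u = v0) := fun h => h2 ⟨h.2, h.1⟩
        have h2' : ¬ (v = v0 ∧ u = u0) := fun h => h1 ⟨h.2, h.1⟩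
        simp only [patchP, dif_neg h1', dif_neg h2']
      rw [e1, e2]
      exact hp u v

end Aux

theorem stmt3 {V : Type*} [Fintype V] (G : SimpleGraph V) (hG : G.Connected)
    (hnc : ¬ ∀ u v : V, u ≠ v → G.Adj u v) :
    sgc G ≤ Fintype.card V - sg G := by
  classical
  push_neg at hnc
  obtain ⟨u0, v0, hne, hnadj⟩ := hnc
  have hcard2 : 2 ≤ Fintype.card V := Fintype.one_lt_card_iff_nontrivial.2 ⟨u0, v0, hne⟩
  -- a geodesic between the nonadjacent pair has an interior vertex
  have hd2 : 2 ≤ G.dist u0 v0 := by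
    have h0 : G.dist u0 v0 ≠ 0 := fun h => hne (hG.dist_eq_zero_iff.1 h)
    have h1 : G.dist u0 v0 ≠ 1 := fun h => hnadj (SimpleGraph.dist_eq_one_iff_adj.1 h)
    omega
  obtain ⟨q, hqp, hql⟩ : ∃ q : G.Walk u0 v0, q.IsPath ∧ q.length = G.dist u0 v0 :=
    ⟨geoWalk G hG u0 v0, geoWalk_isPath G hG u0 v0, geoWalk_length G hG u0 v0⟩
  -- sg G ≤ card V - 1
  have hsg_le : sg G ≤ Fintype.card V - 1 := by
    cases q with
    | nil => simp at hd2
    | cons hadj r =>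
      rename_i b
      have hqp2 := (SimpleGraph.Walk.cons_isPath_iff hadj r).1 hqp
      have hbu : b ≠ u0 := fun h => (G.irrefl (h ▸ hadj))
      have hbv : b ≠ v0 := by
        rintro rfl
        have := (SimpleGraph.Walk.isPath_iff_eq_nil).1 hqp2.1
        subst this
        simp at hql
        omega
      obtain ⟨p0, hp0⟩ := exists_strongGeodeticChoice G hG
      obtain ⟨hp', hval⟩ := patchP_choice G hne hqp hql hp0
      refine Nat.sInf_le ⟨Set.univ \ {b}, ?_, ⟨patchP G (SimpleGraph.Walk.cons hadj r) p0, hp', ?_⟩⟩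
      · rw [Set.ncard_diff_singleton_of_mem (Set.mem_univ b), Set.ncard_univ,
          Nat.card_eq_fintype_card]
      · intro w
        by_cases hw : w = b
        · subst hw
          exact ⟨u0, ⟨Set.mem_univ _, fun h => hbu (Set.mem_singleton_iff.1 h).symm⟩,
            v0, ⟨Set.mem_univ _, fun h => hbv (Set.mem_singleton_iff.1 h).symm⟩,
            by rw [hval]; simp [SimpleGraph.Walk.start_mem_support]⟩
        · exact ⟨w, ⟨Set.mem_univ _, (fun h => hw (Set.mem_singleton_iff.1 h))⟩,
            w, ⟨Set.mem_univ _, (fun h => hw (Set.mem_singleton_iff.1 h))⟩,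
            SimpleGraph.Walk.start_mem_support _⟩
  -- a minimum strong geodetic set
  have hsgne : {n | ∃ S : Set V, S.ncard = n ∧ IsStrongGeodeticSet G S}.Nonempty := by
    obtain ⟨p0, hp0⟩ := exists_strongGeodeticChoice G hG
    exact ⟨(Set.univ : Set V).ncard, Set.univ, rfl, p0, hp0,
      fun w => ⟨w, Set.mem_univ _, w, Set.mem_univ _, SimpleGraph.Walk.start_mem_support _⟩⟩
  obtain ⟨S, hScard, p, hp, hScov⟩ := Nat.sInf_mem hsgne
  -- hScard : S.ncard = sg G
  -- minimal core X inside S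
  have hKne : {k | ∃ X : Set V, X ⊆ S ∧ X.ncard = k ∧
      ∀ w : V, ∃ u ∈ X, ∃ v ∈ S, w ∈ (p u v).support}.Nonempty :=
    ⟨S.ncard, S, subset_rfl, rfl, hScov⟩
  have hXmem := Nat.sInf_mem hKne
  simp only [Set.mem_setOf_eq] at hXmem
  obtain ⟨X, hXS, hXcard, hXcov⟩ := hXmem
  have hsgc_le : sgc G ≤ X.ncard :=
    Nat.sInf_le ⟨S, X, p, hp, hScard, hScov, hXS, rfl, hXcov⟩
  -- it remains to show X.ncard ≤ card V - sg G
  have hfin : ∀ T : Set V, T.Finite := fun T => Set.toFinite T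
  have hScard' : S.ncard = sg G := hScard
  by_cases hk1 : X.ncard ≤ 1
  · omega
  · push_neg at hk1
    have hX2 : 2 ≤ X.ncard := hk1
    -- private vertices
    have key : ∀ x : V, ∃ w : V, x ∈ X →
        ∀ u ∈ X, u ≠ x → ∀ v ∈ S, w ∉ (p u v).support := by
      intro x
      by_cases hx : x ∈ X
      · by_contra hcon
        push_neg at hcon
        have hcov' : ∀ w : V, ∃ u ∈ X \ {x}, ∃ v ∈ S, w ∈ (p u v).support := by
          intro w
          obtain ⟨-, u, hu, hux, v, hv, hmem⟩ := hcon w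
          exact ⟨u, ⟨hu, hux⟩, v, hv, hmem⟩
        have hlt : (X \ {x}).ncard < X.ncard :=
          Set.ncard_diff_singleton_lt_of_mem hx (hfin X)
        have hle' : sInf {k | ∃ Y : Set V, Y ⊆ S ∧ Y.ncard = k ∧
            ∀ w : V, ∃ u ∈ Y, ∃ v ∈ S, w ∈ (p u v).support} ≤ (X \ {x}).ncard :=
          Nat.sInf_le ⟨X \ {x}, (Set.diff_subset).trans hXS, rfl, hcov'⟩
        omega
      · exact ⟨u0, fun h => absurd h hx⟩
    choose f hf using key
    -- f maps X into the complement of S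
    have hmaps : ∀ x ∈ X, f x ∈ Sᶜ := by
      intro x hx hfx
      obtain ⟨y, hy, hyx⟩ := Set.exists_ne_of_one_lt_ncard (lt_of_lt_of_le one_lt_two hX2) x
      exact hf x hx y hy hyx (f x) hfx (SimpleGraph.Walk.end_mem_support _)
    -- f is injective on X
    have hinj : Set.InjOn f X := by
      intro x hx y hy hxy
      by_contra hne2
      obtain ⟨u, hu, v, hv, hmem⟩ := hXcov (f x)
      have hux : u = x := by
        by_contra h
        exact hf x hx u hu h v hv hmem
      have huy : u = y := by
        by_contra h
        exact hf y hy u hu h v hv (hxy ▸ hmem)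
      exact hne2 (hux ▸ huy)
    have hle : X.ncard ≤ Sᶜ.ncard :=
      Set.ncard_le_ncard_of_injOn f hmaps hinj (hfin _)
    have hcompl : S.ncard + Sᶜ.ncard = Fintype.card V := by
      rw [Set.ncard_add_ncard_compl S (hfin S), Nat.card_eq_fintype_card]
    omega
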